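/- arXiv:1202.0862 — 2 statements merged into one kernel-verified Lean document; each statement's English description precedes it below -/
import Mathlib

section
/- Let T : ℕ → ℕ be defined by T(0) = 1 and T(n) = 11 + 10·n·T(n-1) for n ≥ 1 (the number of nodes in the e-Valuate game tree on an expression with n variables). Then for every n ≥ 0, as rational numbers, T(n) = n!·10^n · ( (∑_{i=0}^{n} 1/(i!·10^i)) + (∑_{i=1}^{n} 1/(i!·10^{i-1})) ). -/
theorem stmt0 (T : ℕ → ℕ) (hT0 : T 0 = 1)
    (hT : ∀ n : ℕ, 1 ≤ n → T n = 11 + 10 * n * T (n - 1)) :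
    ∀ n : ℕ, (T n : ℚ) =
      (Nat.factorial n : ℚ) * 10 ^ n *
        ((∑ i ∈ Finset.range (n + 1), 1 / ((Nat.factorial i : ℚ) * 10 ^ i)) +
         (∑ i ∈ Finset.Icc 1 n, 1 / ((Nat.factorial i : ℚ) * 10 ^ (i - 1)))) := by
  intro n
  induction n with
  | zero => simp [hT0]
  | succ n ih =>
    have hrec := hT (n + 1) (Nat.le_add_left 1 n)
    simp only [Nat.add_sub_cancel] at hrec
    rw [hrec]
    push_cast
    rw [Finset.sum_range_succ, Finset.sum_Icc_succ_top (by omega : 1 ≤ n + 1), ih]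
    have hfac : (Nat.factorial (n + 1) : ℚ) = (n + 1) * Nat.factorial n := by
      push_cast [Nat.factorial_succ]; ring
    have hfne : (Nat.factorial (n + 1) : ℚ) ≠ 0 := by
      exact_mod_cast (Nat.factorial_pos (n + 1)).ne'
    have h10 : (10 : ℚ) ^ (n + 1) ≠ 0 := pow_ne_zero _ (by norm_num)
    simp only [Nat.add_sub_cancel]
    field_simp
    rw [hfac]
    ring
end

section
/- Let T : ℕ → ℕ be defined by T(0) = 1 and T(n) = 11 + 10·n·T(n-1) for n ≥ 1. Then for every n ≥ 0, as real numbers, T(n) ≤ 2·e^{1/10}·n!·10^n. -/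
open Finset in
lemma stmt2_formula (T : ℕ → ℕ) (hT0 : T 0 = 1)
    (hT : ∀ n : ℕ, 1 ≤ n → T n = 11 + 10 * n * T (n - 1)) :
    ∀ n : ℕ, (T n : ℝ) =
      11 * (∑ k ∈ range (n + 1), (1/10 : ℝ) ^ k / k.factorial)
        * (Nat.factorial n : ℝ) * 10 ^ n - 10 * (Nat.factorial n : ℝ) * 10 ^ n := by
  intro n
  induction n with
  | zero => norm_num [hT0]
  | succ n ih =>
      have h := hT (n + 1) (by omega)
      simp only [Nat.add_sub_cancel] at h
      rw [h, Finset.sum_range_succ]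
      have hfac : ((n + 1).factorial : ℝ) = (n + 1) * n.factorial := by
        rw [Nat.factorial_succ]; push_cast; ring
      have hfacpos : (0:ℝ) < ((n+1).factorial : ℝ) := by positivity
      have hx : ((1/10 : ℝ) ^ (n+1) / ((n+1).factorial : ℝ)) *
          (((n+1).factorial : ℝ) * 10 ^ (n+1)) = 1 := by
        field_simp
        ring
        rw [← mul_pow]; norm_num
      push_cast
      linear_combination (10*((n:ℝ)+1)) * ih + (-11) * hx +
        ((-11 * (∑ k ∈ range (n + 1), (1/10 : ℝ) ^ k / k.factorial) + 10) * 10^(n+1)) * hfac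

lemma exp_tenth_le : Real.exp (1/10) ≤ 10/9 := by
  have h := Real.add_one_le_exp (-(1/10) : ℝ)
  have h9 : (9/10 : ℝ) ≤ Real.exp (-(1/10)) := by linarith
  have hmul : Real.exp (1/10) * Real.exp (-(1/10)) = 1 := by
    rw [← Real.exp_add]; norm_num
  have hpos := Real.exp_pos (1/10 : ℝ)
  nlinarith

theorem stmt2 (T : ℕ → ℕ) (hT0 : T 0 = 1)
    (hT : ∀ n : ℕ, 1 ≤ n → T n = 11 + 10 * n * T (n - 1)) :
    ∀ n : ℕ, (T n : ℝ) ≤ 2 * Real.exp (1 / 10) * (Nat.factorial n : ℝ) * 10 ^ n := by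
  intro n
  rw [stmt2_formula T hT0 hT n]
  have hS : (∑ k ∈ Finset.range (n + 1), (1/10 : ℝ) ^ k / k.factorial) ≤ Real.exp (1/10) :=
    Real.sum_le_exp_of_nonneg (by norm_num) (n + 1)
  have he : Real.exp (1/10) ≤ 10/9 := exp_tenth_le
  have hfac : (0 : ℝ) < (Nat.factorial n : ℝ) := by positivity
  have hpow : (0 : ℝ) < (10 : ℝ) ^ n := by positivity
  nlinarith [mul_pos hfac hpow, Real.exp_pos (1/10 : ℝ)]
end
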